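/- For every integer N ≥ 1 there exist constants δ₀(N) > 0 and C(N) > 0 with the following property: for every 0 < δ ≤ δ₀(N) and every matrix A ∈ ℝ^{N×N} satisfying ‖A·Aᵀ − I‖ ≤ δ, there exists a matrix B ∈ ℝ^{N×N} such that (B·A)·(B·A)ᵀ = I and ‖B − I‖ ≤ C(N)·δ. -/

import Mathlib

attribute [local instance] Matrix.frobeniusNormedAddCommGroup

open Matrix

section aux

variable {n : Type*} [Fintype n] [DecidableEq n]

lemma frob_sq (M : Matrix n n ℝ) : ‖M‖ ^ 2 = (Mᴴ * M).trace := by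
  have h : (Mᴴ * M).trace = ∑ i, ∑ j, ‖M i j‖ ^ (2 : ℝ) := by
    simp only [Matrix.trace, Matrix.diag_apply, Matrix.mul_apply, Matrix.conjTranspose_apply,
      star_trivial, Matrix.transpose_apply]
    rw [Finset.sum_comm]
    refine Finset.sum_congr rfl fun i _ => Finset.sum_congr rfl fun j _ => ?_
    rw [Real.rpow_two, Real.norm_eq_abs, sq_abs, sq]
  rw [Matrix.frobenius_norm_def, h, ← Real.rpow_natCast _ 2, ← Real.rpow_mul (by positivity)]
  norm_num

lemma frob_unitary_inv (U : Matrix.unitaryGroup n ℝ) (M : Matrix n n ℝ) :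
    ‖(U : Matrix n n ℝ) * M * star (U : Matrix n n ℝ)‖ = ‖M‖ := by
  have h2 : ‖(U : Matrix n n ℝ) * M * star (U : Matrix n n ℝ)‖ ^ 2 = ‖M‖ ^ 2 := by
    rw [frob_sq, frob_sq]
    have hUU : star (U : Matrix n n ℝ) * (U : Matrix n n ℝ) = 1 := Unitary.coe_star_mul_self U
    simp only [Matrix.star_eq_conjTranspose] at hUU ⊢
    rw [Matrix.conjTranspose_mul, Matrix.conjTranspose_mul, Matrix.conjTranspose_conjTranspose]
    rw [show (U : Matrix n n ℝ) * (Mᴴ * (U : Matrix n n ℝ)ᴴ) * ((U : Matrix n n ℝ) * M * (U : Matrix n n ℝ)ᴴ)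
          = (U : Matrix n n ℝ) * Mᴴ * ((U : Matrix n n ℝ)ᴴ * (U : Matrix n n ℝ)) * M * (U : Matrix n n ℝ)ᴴ by
        simp only [Matrix.mul_assoc]]
    rw [hUU, Matrix.mul_one, Matrix.trace_mul_cycle, ← Matrix.mul_assoc, hUU,
      Matrix.one_mul]
  have := congrArg Real.sqrt h2
  rwa [Real.sqrt_sq (norm_nonneg _), Real.sqrt_sq (norm_nonneg _)] at this

lemma frob_diag_sq (v : n → ℝ) : ‖Matrix.diagonal v‖ ^ 2 = ∑ i, (v i) ^ 2 := by
  rw [frob_sq]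
  have : (Matrix.diagonal v)ᴴ = Matrix.diagonal v := by
    rw [Matrix.diagonal_conjTranspose, star_trivial]
  rw [this, Matrix.diagonal_mul_diagonal, Matrix.trace_diagonal]
  exact Finset.sum_congr rfl fun i _ => (sq (v i)).symm

lemma inv_sqrt_close {x : ℝ} (hx : 1/2 ≤ x) : |(Real.sqrt x)⁻¹ - 1| ≤ 2 * |x - 1| := by
  have hx0 : 0 < x := by linarith
  set t := Real.sqrt x with ht
  have ht0 : 0 < t := Real.sqrt_pos.mpr hx0
  have ht2 : t ^ 2 = x := Real.sq_sqrt hx0.le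
  have h1 : t⁻¹ - 1 = (1 - t) / t := by field_simp
  have key : |t⁻¹ - 1| = |1 - t| / t := by rw [h1, abs_div, abs_of_pos ht0]
  rw [key, div_le_iff₀ ht0]
  rcases le_or_gt t 1 with h | h
  · rw [abs_of_nonneg (by linarith), abs_of_nonpos (by nlinarith)]
    nlinarith [mul_nonneg (sub_nonneg.mpr h) (by nlinarith : (0:ℝ) ≤ 2*t^2 + 2*t - 1)]
  · rw [abs_of_nonpos (by linarith), abs_of_nonneg (by nlinarith)]
    nlinarith [mul_nonneg (sub_nonneg.mpr h.le) (by nlinarith : (0:ℝ) ≤ 2*t^2 + 2*t - 1)]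

end aux

/-- For every integer `N ≥ 1` there exist constants `δ₀(N) > 0` and
`C(N) > 0` such that: for every `0 < δ ≤ δ₀` and every matrix `A ∈ ℝ^{N×N}` with
`‖A·Aᵀ − I‖ ≤ δ`, there exists `B ∈ ℝ^{N×N}` with `(B·A)·(B·A)ᵀ = I` and `‖B − I‖ ≤ C·δ`.
(The norm is the Frobenius norm on `N × N` real matrices.) -/
theorem stmt0 (N : ℕ) (hN : 1 ≤ N) :
    ∃ δ₀ C : ℝ, 0 < δ₀ ∧ 0 < C ∧
      ∀ δ : ℝ, 0 < δ → δ ≤ δ₀ →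
        ∀ A : Matrix (Fin N) (Fin N) ℝ,
          ‖A * A.transpose - 1‖ ≤ δ →
            ∃ B : Matrix (Fin N) (Fin N) ℝ,
              (B * A) * (B * A).transpose = 1 ∧ ‖B - 1‖ ≤ C * δ := by
  refine ⟨1/2, 2, by norm_num, by norm_num, ?_⟩
  intro δ hδ hδ₀ A hA
  have hS : (A * A.transpose).IsHermitian := by
    have := Matrix.isHermitian_mul_conjTranspose_self A
    rwa [Matrix.conjTranspose_eq_transpose_of_trivial] at this
  set S := A * A.transpose with hSdef
  set U : Matrix (Fin N) (Fin N) ℝ := (hS.eigenvectorUnitary : Matrix (Fin N) (Fin N) ℝ) with hUdef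
  set lam : Fin N → ℝ := hS.eigenvalues with hlamdef
  have hUU : star U * U = 1 := Unitary.coe_star_mul_self hS.eigenvectorUnitary
  have hUU' : U * star U = 1 := Unitary.coe_mul_star_self hS.eigenvectorUnitary
  have hspec : S = U * Matrix.diagonal lam * star U := by
    have := hS.spectral_theorem
    rwa [show (RCLike.ofReal ∘ hS.eigenvalues : Fin N → ℝ) = lam by
      rw [RCLike.ofReal_real_eq_id]; rfl] at this
  -- conjugation formula
  have conj_diag : ∀ v w : Fin N → ℝ,
      (U * Matrix.diagonal v * star U) * (U * Matrix.diagonal w * star U)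
        = U * Matrix.diagonal (fun i => v i * w i) * star U := by
    intro v w
    calc U * Matrix.diagonal v * star U * (U * Matrix.diagonal w * star U)
        = U * (Matrix.diagonal v * ((star U * U) * (Matrix.diagonal w * star U))) := by
          simp only [Matrix.mul_assoc]
      _ = U * (Matrix.diagonal v * (Matrix.diagonal w * star U)) := by
          rw [hUU, Matrix.one_mul]
      _ = U * Matrix.diagonal (fun i => v i * w i) * star U := by
          rw [← Matrix.mul_assoc (Matrix.diagonal v), Matrix.diagonal_mul_diagonal,
            ← Matrix.mul_assoc]
  have hone : (1 : Matrix (Fin N) (Fin N) ℝ) = U * Matrix.diagonal (fun _ => (1:ℝ)) * star U := by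
    rw [Matrix.diagonal_one, Matrix.mul_one, hUU']
  have conj_sub : ∀ v w : Fin N → ℝ,
      (U * Matrix.diagonal v * star U) - (U * Matrix.diagonal w * star U)
        = U * Matrix.diagonal (fun i => v i - w i) * star U := by
    intro v w
    rw [← Matrix.sub_mul, ← Matrix.mul_sub, ← Matrix.diagonal_sub]
  have hdiff : S - 1 = U * Matrix.diagonal (fun i => lam i - 1) * star U := by
    rw [hspec, hone, conj_sub]
  have hnormdiff : ‖S - 1‖ = ‖Matrix.diagonal (fun i => lam i - 1)‖ := by
    rw [hdiff]; exact frob_unitary_inv hS.eigenvectorUnitary _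
  have heig : ∀ i, |lam i - 1| ≤ δ := by
    intro i
    have h1 : (lam i - 1) ^ 2 ≤ ‖S - 1‖ ^ 2 := by
      rw [hnormdiff, frob_diag_sq]
      exact Finset.single_le_sum (f := fun j => (lam j - 1) ^ 2)
        (fun j _ => sq_nonneg _) (Finset.mem_univ i)
    have h2 := Real.sqrt_le_sqrt h1
    rw [Real.sqrt_sq_eq_abs, Real.sqrt_sq (norm_nonneg _)] at h2
    exact h2.trans hA
  have hlam_ge : ∀ i, 1/2 ≤ lam i := by
    intro i
    have := abs_le.mp (heig i)
    linarith [this.1]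
  set s : Fin N → ℝ := fun i => (Real.sqrt (lam i))⁻¹ with hsdef
  refine ⟨U * Matrix.diagonal s * star U, ?_, ?_⟩
  · -- (B A)(B A)ᵀ = B S Bᵀ = 1
    set B := U * Matrix.diagonal s * star U with hBdef
    have hBH : Bᴴ = B := by
      rw [hBdef, Matrix.conjTranspose_mul, Matrix.conjTranspose_mul,
        Matrix.star_eq_conjTranspose, Matrix.conjTranspose_conjTranspose,
        Matrix.diagonal_conjTranspose, star_trivial]
      simp only [Matrix.mul_assoc]
    have hBT : B.transpose = B := by
      rw [← Matrix.conjTranspose_eq_transpose_of_trivial, hBH]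
    have hexp : B * A * (B * A).transpose = B * S * B := by
      rw [Matrix.transpose_mul, hBT, hSdef]
      simp only [Matrix.mul_assoc]
    rw [hexp, hspec, conj_diag, conj_diag]
    have : (fun i => s i * lam i * s i) = fun _ => (1:ℝ) := by
      funext i
      have h0 : 0 < lam i := lt_of_lt_of_le (by norm_num) (hlam_ge i)
      have hs : Real.sqrt (lam i) * Real.sqrt (lam i) = lam i :=
        Real.mul_self_sqrt h0.le
      have hsp : 0 < Real.sqrt (lam i) := Real.sqrt_pos.mpr h0
      simp only [hsdef]
      field_simp
      rw [Real.sq_sqrt h0.le]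
    rw [this, ← hone]
  · -- norm bound
    have hBd : U * Matrix.diagonal s * star U - 1
        = U * Matrix.diagonal (fun i => s i - 1) * star U := by
      rw [hone, conj_sub]
    rw [hBd, frob_unitary_inv hS.eigenvectorUnitary]
    have hsq : ‖Matrix.diagonal (fun i => s i - 1)‖ ^ 2 ≤ (2 * δ) ^ 2 := by
      rw [frob_diag_sq]
      have hterm : ∀ i ∈ Finset.univ, (s i - 1) ^ 2 ≤ 4 * (lam i - 1) ^ 2 := by
        intro i _
        have h := inv_sqrt_close (hlam_ge i)
        nlinarith [sq_abs (s i - 1), sq_abs (lam i - 1), abs_nonneg (s i - 1),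
          abs_nonneg (lam i - 1)]
      calc (∑ i, (s i - 1) ^ 2) ≤ ∑ i, 4 * (lam i - 1) ^ 2 := Finset.sum_le_sum hterm
        _ = 4 * ∑ i, (lam i - 1) ^ 2 := by rw [Finset.mul_sum]
        _ = 4 * ‖Matrix.diagonal (fun i => lam i - 1)‖ ^ 2 := by rw [frob_diag_sq]
        _ = 4 * ‖S - 1‖ ^ 2 := by rw [hnormdiff]
        _ ≤ (2 * δ) ^ 2 := by nlinarith [norm_nonneg (S - 1), hA]
    have := Real.sqrt_le_sqrt hsq
    rwa [Real.sqrt_sq (norm_nonneg _), Real.sqrt_sq (by positivity)] at this
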